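/- Let I ⊆ [0,1] ∩ ℚ and define D(I) = { (m-1+∑_{j=1}^n i_j)/m : m ≥ 1, n ≥ 0, i_j ∈ I } ∩ [0,1]. Then D(D(I)) = D(I) ∪ {1}. In particular, D(I) is closed under the operation D up to adjoining 1. -/

import Mathlib

/-- The derived coefficient set `D(I)` of a subset `I ⊆ [0,1]`:
`D(I) = { (m-1+∑_{j=1}^n i_j)/m : m ≥ 1, n ≥ 0, i_j ∈ I } ∩ [0,1]`. -/
def Dset (I : Set ℚ) : Set ℚ :=
  {x | ∃ m : ℕ, 1 ≤ m ∧ ∃ (n : ℕ) (i : Fin n → ℚ), (∀ j, i j ∈ I) ∧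
      x = ((m : ℚ) - 1 + ∑ j, i j) / m} ∩ Set.Icc 0 1

lemma mem_Dset_iff (I : Set ℚ) (x : ℚ) :
    x ∈ Dset I ↔ (∃ m : ℕ, 1 ≤ m ∧ ∃ t : Multiset ℚ, (∀ a ∈ t, a ∈ I) ∧
      x = ((m : ℚ) - 1 + t.sum) / m) ∧ x ∈ Set.Icc 0 1 := by
  constructor
  · rintro ⟨⟨m, hm, n, i, hi, hx⟩, hIcc⟩
    refine ⟨⟨m, hm, Finset.univ.val.map i, ?_, ?_⟩, hIcc⟩
    · intro a ha
      obtain ⟨j, _, rfl⟩ := Multiset.mem_map.1 ha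
      exact hi j
    · rw [hx]; rfl
  · rintro ⟨⟨m, hm, t, ht, hx⟩, hIcc⟩
    refine ⟨⟨m, hm, t.toList.length, fun j => t.toList.get j, ?_, ?_⟩, hIcc⟩
    · intro j
      exact ht _ (by rw [← Multiset.mem_toList]; exact t.toList.get_mem j)
    · rw [hx]
      congr 1
      congr 1
      rw [show (∑ j : Fin t.toList.length, t.toList.get j)
            = ∑ j : Fin t.toList.length, t.toList[j.1] from rfl,
        Fin.sum_univ_getElem, Multiset.sum_toList]

lemma key (I : Set ℚ) (hI : I ⊆ Set.Icc 0 1) (s : Multiset ℚ)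
    (hs : ∀ a ∈ s, a ∈ Dset I) :
    ∃ q e : ℕ, 1 ≤ q ∧ q ≤ e + 1 ∧ ∃ t : Multiset ℚ, (∀ a ∈ t, a ∈ I) ∧
      (q : ℚ) * s.sum = (e : ℚ) + t.sum := by
  induction s using Multiset.induction with
  | empty => exact ⟨1, 0, le_refl 1, by norm_num, 0, by simp, by simp⟩
  | cons y s ih =>
    obtain ⟨q, e, hq, hqe, t, ht, hsum⟩ :=
      ih (fun a ha => hs a (Multiset.mem_cons_of_mem ha))
    obtain ⟨⟨k, hk, u, hu, hy⟩, _⟩ := (mem_Dset_iff I y).1 (hs y (Multiset.mem_cons_self y s))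
    refine ⟨q * k, q * (k - 1) + k * e, Nat.one_le_iff_ne_zero.2 (by positivity), ?_,
      q • u + k • t, ?_, ?_⟩
    · have h1 : e ≤ k * e := Nat.le_mul_of_pos_left e hk
      have h3 : q * (k - 1) + q * 1 = q * k := by
        rw [← Nat.mul_add]; congr 1; omega
      omega
    · intro a ha
      rcases Multiset.mem_add.1 ha with h | h
      · exact hu _ (Multiset.mem_of_mem_nsmul h)
      · exact ht _ (Multiset.mem_of_mem_nsmul h)
    · have hk' : (k : ℚ) ≠ 0 := Nat.cast_ne_zero.2 (by omega)
      have hy' : (k : ℚ) * y = (k : ℚ) - 1 + u.sum := by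
        rw [hy]; field_simp
      have hsumsm : (q • u + k • t).sum = (q : ℚ) * u.sum + (k : ℚ) * t.sum := by
        rw [Multiset.sum_add, Multiset.sum_nsmul, Multiset.sum_nsmul, nsmul_eq_mul,
          nsmul_eq_mul]
      rw [Multiset.sum_cons, hsumsm]
      push_cast [Nat.cast_sub hk]
      linear_combination (q : ℚ) * hy' + (k : ℚ) * hsum

/-- For `I ⊆ [0,1] ∩ ℚ`, one has `D(D(I)) = D(I) ∪ {1}`; in particular `D(I)` is
closed under `D` up to adjoining `1`. -/
theorem stmt0 (I : Set ℚ) (hI : I ⊆ Set.Icc 0 1) :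
    Dset (Dset I) = Dset I ∪ {1} := by
  ext x
  constructor
  · intro hx
    obtain ⟨⟨m, hm, s, hs, hxs⟩, hx0, hx1⟩ := (mem_Dset_iff _ x).1 hx
    obtain ⟨q, e, hq, hqe, t, ht, hsum⟩ := key I hI s hs
    have hm' : (m : ℚ) ≠ 0 := Nat.cast_ne_zero.2 (by omega)
    have hq' : (q : ℚ) ≠ 0 := Nat.cast_ne_zero.2 (by omega)
    have htnn : (0 : ℚ) ≤ t.sum :=
      Multiset.sum_nonneg (fun a ha => (hI (ht a ha)).1)
    have hmx : (m : ℚ) * x = (m : ℚ) - 1 + s.sum := by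
      rw [hxs]; field_simp
    have hqmx : (q : ℚ) * (m : ℚ) * x = (q : ℚ) * m - (q : ℚ) + (e : ℚ) + t.sum := by
      linear_combination (q : ℚ) * hmx + hsum
    have hle : (e : ℚ) ≤ (q : ℚ) := by
      nlinarith [mul_pos (show (0:ℚ) < q by positivity) (show (0:ℚ) < m by positivity)]
    have he : e + 1 = q ∨ e = q := by
      have := Nat.cast_le (α := ℚ).1 hle
      omega
    rcases he with he | he
    · left
      refine (mem_Dset_iff I x).2 ⟨⟨q * m, Nat.one_le_iff_ne_zero.2 (by positivity), t, ht, ?_⟩,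
        hx0, hx1⟩
      have hqm : ((q * m : ℕ) : ℚ) ≠ 0 := Nat.cast_ne_zero.2 (by positivity)
      rw [eq_div_iff hqm]
      push_cast
      have he' : (e : ℚ) + 1 = q := by exact_mod_cast congrArg (Nat.cast : ℕ → ℚ) he
      nlinarith [hqmx, he']
    · right
      have he' : (e : ℚ) = q := by exact_mod_cast he
      have ht0 : t.sum ≤ 0 := by
        nlinarith [mul_pos (show (0:ℚ) < q by positivity) (show (0:ℚ) < m by positivity)]
      have ht0' : t.sum = 0 := le_antisymm ht0 htnn
      have hqmx1 : (q : ℚ) * (m : ℚ) * x = (q : ℚ) * (m : ℚ) * 1 := by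
        rw [mul_one, hqmx, he', ht0']; ring
      have : x = 1 := mul_left_cancel₀ (mul_ne_zero hq' hm') hqmx1
      simp [this]
  · rintro (hx | hx)
    · exact (mem_Dset_iff _ x).2 ⟨⟨1, le_refl 1, {x}, by simpa using hx, by simp⟩, hx.2⟩
    · have hhalf : (2 : ℚ)⁻¹ ∈ Dset I :=
        (mem_Dset_iff I _).2 ⟨⟨2, by norm_num, 0, by simp, by norm_num⟩, by norm_num, by norm_num⟩
      rw [Set.mem_singleton_iff.1 hx]
      refine (mem_Dset_iff _ 1).2 ⟨⟨2, by norm_num, {2⁻¹, 2⁻¹}, ?_, by norm_num⟩,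
        by norm_num, by norm_num⟩
      intro a ha
      simp only [Multiset.insert_eq_cons, Multiset.mem_cons, Multiset.mem_singleton] at ha
      rcases ha with ha | ha <;> (rw [ha]; exact hhalf)
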